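/- Let a and b be nonempty finite types with decidable equality, d_a := card a. Let H : Matrix a a ℂ be Hermitian, L : Matrix b b ℂ →ₗ[ℂ] Matrix b b ℂ a linear map with Tr[L X] = 0 for all X, and let η be a positive definite matrix of trace 1 on a and ρ, τ positive definite matrices of trace 1 on b. Then −Re Tr[(−i • ((H ⊗ₖ 1) * (η ⊗ₖ ρ) − (η ⊗ₖ ρ) * (H ⊗ₖ 1)) + η ⊗ₖ (L ρ)) * (log(η ⊗ₖ ρ) − log((1/d_a : ℝ) • (1 ⊗ₖ τ)))] = −Re Tr[(L ρ) * (log ρ − log τ)]. -/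

import Mathlib

open Matrix Kronecker
open scoped ComplexOrder

/-- matrix logarithm via the continuous functional calculus -/
noncomputable def mlog {n : Type*} [Fintype n] [DecidableEq n] (A : Matrix n n ℂ) :
    Matrix n n ℂ := cfc Real.log A

set_option linter.unusedSectionVars false

section Aux

variable {n : Type*} [Fintype n] [DecidableEq n]

lemma contOn_spectrum (f : ℝ → ℝ) (A : Matrix n n ℂ) : ContinuousOn f (spectrum ℝ A) :=
  (Matrix.finite_real_spectrum (A := A)).continuousOn f

lemma posDef_spectrum_pos {A : Matrix n n ℂ} (hA : A.PosDef) :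
    ∀ x ∈ spectrum ℝ A, 0 < x := by
  rw [Matrix.IsHermitian.spectrum_real_eq_range_eigenvalues hA.1]
  rintro x ⟨i, rfl⟩
  exact hA.eigenvalues_pos i

lemma mlog_isSelfAdjoint (A : Matrix n n ℂ) : IsSelfAdjoint (mlog A) :=
  cfc_predicate _ _

lemma posDef_one : (1 : Matrix n n ℂ).PosDef := by
  exact Matrix.PosDef.one

lemma commute_mlog {A : Matrix n n ℂ} (hA : IsSelfAdjoint A) :
    A * mlog A = mlog A * A := by
  have h1 : cfc (fun x : ℝ => x * Real.log x) A = cfc (fun x : ℝ => x) A * cfc Real.log A :=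
    cfc_mul _ _ A (contOn_spectrum _ A) (contOn_spectrum _ A)
  have h2 : cfc (fun x : ℝ => Real.log x * x) A = cfc Real.log A * cfc (fun x : ℝ => x) A :=
    cfc_mul _ _ A (contOn_spectrum _ A) (contOn_spectrum _ A)
  have h3 : cfc (fun x : ℝ => x * Real.log x) A = cfc (fun x : ℝ => Real.log x * x) A :=
    cfc_congr fun x _ => mul_comm _ _
  rw [cfc_id' ℝ A] at h1 h2
  rw [mlog, ← h1, h3, h2]

open scoped Matrix.Norms.L2Operator MatrixOrder in
lemma exp_mlog {A : Matrix n n ℂ} (hA : A.PosDef) :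
    NormedSpace.exp (mlog A) = A := by
  exact CFC.exp_log A hA.isStrictlyPositive

open scoped Matrix.Norms.L2Operator in
lemma mlog_exp {A : Matrix n n ℂ} (hA : IsSelfAdjoint A) :
    mlog (NormedSpace.exp A) = A := by
  exact CFC.log_exp A hA

open scoped Matrix.Norms.L2Operator in
lemma mlog_smul {A : Matrix n n ℂ} (hA : A.PosDef) {r : ℝ} (hr : 0 < r) :
    mlog (r • A) = algebraMap ℝ (Matrix n n ℂ) (Real.log r) + mlog A := by
  exact CFC.log_smul A (fun x hx => (posDef_spectrum_pos hA x hx).ne') hr.ne' hA.1.isSelfAdjoint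

open scoped Matrix.Norms.L2Operator in
lemma mlog_one : mlog (1 : Matrix n n ℂ) = 0 := by
  exact CFC.log_one

end Aux

section Kron

variable {a b : Type*} [Fintype a] [Fintype b] [DecidableEq a] [DecidableEq b]

lemma kron_conjTranspose (A : Matrix a a ℂ) (B : Matrix b b ℂ) :
    (A ⊗ₖ B)ᴴ = Aᴴ ⊗ₖ Bᴴ := by
  ext ⟨i, j⟩ ⟨k, l⟩
  simp [Matrix.conjTranspose_apply, star_mul']

lemma sub_kron (A B : Matrix a a ℂ) (C : Matrix b b ℂ) :
    (A - B) ⊗ₖ C = A ⊗ₖ C - B ⊗ₖ C := by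
  ext ⟨i, j⟩ ⟨k, l⟩
  simp [sub_mul]

/-- `A ↦ A ⊗ₖ 1` as a ring homomorphism. -/
noncomputable def kronLeftRingHom :
    Matrix a a ℂ →+* Matrix (a × b) (a × b) ℂ where
  toFun A := A ⊗ₖ (1 : Matrix b b ℂ)
  map_one' := Matrix.one_kronecker_one
  map_mul' A B := by rw [← Matrix.mul_kronecker_mul, Matrix.one_mul]
  map_zero' := Matrix.zero_kronecker _
  map_add' A B := Matrix.add_kronecker A B _

/-- `B ↦ 1 ⊗ₖ B` as a ring homomorphism. -/
noncomputable def kronRightRingHom :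
    Matrix b b ℂ →+* Matrix (a × b) (a × b) ℂ where
  toFun B := (1 : Matrix a a ℂ) ⊗ₖ B
  map_one' := Matrix.one_kronecker_one
  map_mul' A B := by rw [← Matrix.mul_kronecker_mul, Matrix.one_mul]
  map_zero' := Matrix.kronecker_zero _
  map_add' A B := Matrix.kronecker_add _ A B

lemma continuous_kronLeft : Continuous (fun A : Matrix a a ℂ => A ⊗ₖ (1 : Matrix b b ℂ)) := by
  apply continuous_matrix
  rintro ⟨i, j⟩ ⟨k, l⟩
  simp only [Matrix.kroneckerMap_apply]
  fun_prop

lemma continuous_kronRight : Continuous (fun B : Matrix b b ℂ => (1 : Matrix a a ℂ) ⊗ₖ B) := by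
  apply continuous_matrix
  rintro ⟨i, j⟩ ⟨k, l⟩
  simp only [Matrix.kroneckerMap_apply]
  fun_prop

open scoped Matrix.Norms.Operator in
lemma exp_kron_left (A : Matrix a a ℂ) :
    NormedSpace.exp (A ⊗ₖ (1 : Matrix b b ℂ)) = (NormedSpace.exp A) ⊗ₖ (1 : Matrix b b ℂ) := by
  have hc : Continuous (kronLeftRingHom (a := a) (b := b)) := continuous_kronLeft
  exact (NormedSpace.map_exp (kronLeftRingHom (a := a) (b := b)) hc A).symm

open scoped Matrix.Norms.Operator in
lemma exp_kron_right (B : Matrix b b ℂ) :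
    NormedSpace.exp ((1 : Matrix a a ℂ) ⊗ₖ B) = (1 : Matrix a a ℂ) ⊗ₖ (NormedSpace.exp B) := by
  have hc : Continuous (kronRightRingHom (a := a) (b := b)) := continuous_kronRight
  exact (NormedSpace.map_exp (kronRightRingHom (a := a) (b := b)) hc B).symm

lemma mlog_kron {A : Matrix a a ℂ} {B : Matrix b b ℂ} (hA : A.PosDef) (hB : B.PosDef) :
    mlog (A ⊗ₖ B) = (mlog A) ⊗ₖ (1 : Matrix b b ℂ) + (1 : Matrix a a ℂ) ⊗ₖ (mlog B) := by
  have hsaA := mlog_isSelfAdjoint A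
  have hsaB := mlog_isSelfAdjoint B
  have hKh : (mlog A)ᴴ = mlog A := hsaA
  have hMh : (mlog B)ᴴ = mlog B := hsaB
  have hsa : IsSelfAdjoint ((mlog A) ⊗ₖ (1 : Matrix b b ℂ) +
      (1 : Matrix a a ℂ) ⊗ₖ (mlog B)) := by
    have : ((mlog A) ⊗ₖ (1 : Matrix b b ℂ) + (1 : Matrix a a ℂ) ⊗ₖ (mlog B))ᴴ =
        (mlog A) ⊗ₖ (1 : Matrix b b ℂ) + (1 : Matrix a a ℂ) ⊗ₖ (mlog B) := by
      rw [Matrix.conjTranspose_add, kron_conjTranspose, kron_conjTranspose,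
        Matrix.conjTranspose_one, Matrix.conjTranspose_one, hKh, hMh]
    exact this
  have hcomm : Commute ((mlog A) ⊗ₖ (1 : Matrix b b ℂ)) ((1 : Matrix a a ℂ) ⊗ₖ (mlog B)) := by
    show _ * _ = _ * _
    rw [← Matrix.mul_kronecker_mul, ← Matrix.mul_kronecker_mul, Matrix.one_mul,
      Matrix.mul_one, Matrix.one_mul, Matrix.mul_one]
  have hexp : NormedSpace.exp ((mlog A) ⊗ₖ (1 : Matrix b b ℂ) +
      (1 : Matrix a a ℂ) ⊗ₖ (mlog B)) = A ⊗ₖ B := by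
    have h : NormedSpace.exp ((mlog A) ⊗ₖ (1 : Matrix b b ℂ) +
        (1 : Matrix a a ℂ) ⊗ₖ (mlog B)) =
        NormedSpace.exp ((mlog A) ⊗ₖ (1 : Matrix b b ℂ)) *
          NormedSpace.exp ((1 : Matrix a a ℂ) ⊗ₖ (mlog B)) :=
      Matrix.exp_add_of_commute _ _ hcomm
    rw [h, exp_kron_left, exp_kron_right,
      exp_mlog hA, exp_mlog hB, ← Matrix.mul_kronecker_mul, Matrix.mul_one, Matrix.one_mul]
  rw [← hexp, mlog_exp hsa]

lemma trace_kron_mul (A C : Matrix a a ℂ) (B E : Matrix b b ℂ) :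
    Matrix.trace ((A ⊗ₖ B) * (C ⊗ₖ E)) = Matrix.trace (A * C) * Matrix.trace (B * E) := by
  rw [← Matrix.mul_kronecker_mul, Matrix.trace_kronecker]

end Kron

/-- **Key identity in the proof of Theorem 4.1, part 1.**  For the Lindbladian
`𝓛_*(·) = −i[H ⊗ I, ·] + (I ⊗ L_*)(·)` applied to a product state `η ⊗ ρ`, the
entropy production with reference state `(I/d_a) ⊗ τ` equals the entropy
production of the system-B semigroup at `ρ`. -/
theorem entropy_production_product_state
    {a b : Type*} [Fintype a] [Fintype b] [DecidableEq a] [DecidableEq b]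
    [Nonempty a] [Nonempty b]
    (H : Matrix a a ℂ) (hH : H.IsHermitian)
    (L : Matrix b b ℂ →ₗ[ℂ] Matrix b b ℂ)
    (hL : ∀ X : Matrix b b ℂ, Matrix.trace (L X) = 0)
    (η : Matrix a a ℂ) (hη : η.PosDef) (hηtr : Matrix.trace η = 1)
    (ρ τ : Matrix b b ℂ) (hρ : ρ.PosDef) (hρtr : Matrix.trace ρ = 1)
    (hτ : τ.PosDef) (hτtr : Matrix.trace τ = 1) :
    -(Matrix.trace
        ((-(Complex.I) • ((H ⊗ₖ (1 : Matrix b b ℂ)) * (η ⊗ₖ ρ) -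
            (η ⊗ₖ ρ) * (H ⊗ₖ (1 : Matrix b b ℂ))) + η ⊗ₖ (L ρ)) *
          (mlog (η ⊗ₖ ρ) -
            mlog ((1 / (Fintype.card a : ℝ)) •
              ((1 : Matrix a a ℂ) ⊗ₖ τ))))).re =
      -(Matrix.trace ((L ρ) * (mlog ρ - mlog τ))).re := by
  have hd : (0 : ℝ) < 1 / (Fintype.card a : ℝ) := by
    have : (0 : ℝ) < (Fintype.card a : ℝ) := by exact_mod_cast Fintype.card_pos
    positivity
  -- positive definiteness of the scaled matrix
  have hτ' : ((1 / (Fintype.card a : ℝ)) • τ).PosDef := by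
    exact hτ.smul hd
  set c : ℝ := Real.log (1 / (Fintype.card a : ℝ)) with hc
  set K := mlog η with hK
  set M := mlog ρ with hM
  set N := mlog τ with hN
  have hlog1 : mlog (η ⊗ₖ ρ) = K ⊗ₖ (1 : Matrix b b ℂ) + (1 : Matrix a a ℂ) ⊗ₖ M :=
    mlog_kron hη hρ
  have hsmul : (1 / (Fintype.card a : ℝ)) • ((1 : Matrix a a ℂ) ⊗ₖ τ) =
      (1 : Matrix a a ℂ) ⊗ₖ ((1 / (Fintype.card a : ℝ)) • τ) :=
    (Matrix.kronecker_smul _ _ _).symm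
  have hlog2 : mlog ((1 / (Fintype.card a : ℝ)) • ((1 : Matrix a a ℂ) ⊗ₖ τ)) =
      c • (1 : Matrix (a × b) (a × b) ℂ) + (1 : Matrix a a ℂ) ⊗ₖ N := by
    rw [hsmul, mlog_kron posDef_one hτ', mlog_one, Matrix.zero_kronecker, zero_add,
      mlog_smul hτ hd, Matrix.kronecker_add, Algebra.algebraMap_eq_smul_one,
      Matrix.kronecker_smul, Matrix.one_kronecker_one, hN]
  have hG : (H ⊗ₖ (1 : Matrix b b ℂ)) * (η ⊗ₖ ρ) - (η ⊗ₖ ρ) * (H ⊗ₖ (1 : Matrix b b ℂ)) =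
      (H * η - η * H) ⊗ₖ ρ := by
    rw [← Matrix.mul_kronecker_mul, ← Matrix.mul_kronecker_mul, Matrix.one_mul,
      Matrix.mul_one, sub_kron]
  set G := H * η - η * H with hGdef
  have htrG : Matrix.trace G = 0 := by
    rw [hGdef, Matrix.trace_sub, Matrix.trace_mul_comm, sub_self]
  have htrGK : Matrix.trace (G * K) = 0 := by
    have hcommηK : η * K = K * η := commute_mlog hη.1.isSelfAdjoint
    rw [hGdef, Matrix.sub_mul, Matrix.trace_sub]
    rw [Matrix.mul_assoc, Matrix.mul_assoc, hcommηK, ← Matrix.mul_assoc, ← Matrix.mul_assoc]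
    rw [Matrix.trace_mul_comm (H * K) η, Matrix.mul_assoc]
    rw [Matrix.trace_mul_comm η (H * K), Matrix.mul_assoc]
    exact sub_self _
  have htrL : Matrix.trace (L ρ) = 0 := hL ρ
  have key : Matrix.trace
      ((-(Complex.I) • ((H ⊗ₖ (1 : Matrix b b ℂ)) * (η ⊗ₖ ρ) -
          (η ⊗ₖ ρ) * (H ⊗ₖ (1 : Matrix b b ℂ))) + η ⊗ₖ (L ρ)) *
        (mlog (η ⊗ₖ ρ) -
          mlog ((1 / (Fintype.card a : ℝ)) • ((1 : Matrix a a ℂ) ⊗ₖ τ)))) =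
      Matrix.trace ((L ρ) * (mlog ρ - mlog τ)) := by
    rw [hlog1, hlog2, hG]
    simp only [Matrix.add_mul, Matrix.mul_add, Matrix.mul_sub, Matrix.sub_mul,
      smul_mul_assoc, mul_smul_comm, Matrix.mul_one, Matrix.one_mul,
      Matrix.trace_add, Matrix.trace_sub, Matrix.trace_smul, trace_kron_mul,
      Matrix.trace_kronecker]
    simp only [htrGK, htrG, htrL, hηtr, hρtr, zero_mul, mul_zero, mul_one, one_mul,
      smul_zero, zero_add, add_zero, sub_zero, zero_sub, smul_eq_mul, Complex.real_smul]
    rfl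
  rw [key]
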